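/- arXiv:2205.02224 — 4 statements merged into one kernel-verified Lean document; each statement's English description precedes it below -/
import Mathlib

section
/- For constants M ≥ m > 0 and Γ ≥ 1, the function f(w) = ((M−m)w + m)/((M−m)w/Γ + m) on [0,1] is bounded above by Γ·(M/m)/(Γ + M/m − 1). -/
theorem ratio_function_bound (m M Γ : ℝ) (hm : 0 < m) (hMm : m ≤ M) (hΓ : 1 ≤ Γ) :
    ∀ w ∈ Set.Icc (0 : ℝ) 1,
      ((M - m) * w + m) / ((M - m) * w / Γ + m) ≤ Γ * (M / m) / (Γ + M / m - 1) := by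
  intro w hw
  obtain ⟨hw0, hw1⟩ := hw
  have hΓ0 : (0:ℝ) < Γ := lt_of_lt_of_le one_pos hΓ
  have hd1 : 0 < (M - m) * w / Γ + m := by
    have h1 : 0 ≤ (M - m) * w / Γ :=
      div_nonneg (mul_nonneg (sub_nonneg.mpr hMm) hw0) hΓ0.le
    linarith
  have hd2 : 0 < Γ + M / m - 1 := by
    have : (1:ℝ) ≤ M / m := (one_le_div hm).mpr hMm
    linarith
  have key : 0 ≤ m * (M - m) * (Γ - 1) * (1 - w) := by
    have h1 := sub_nonneg.mpr hMm
    have h2 := sub_nonneg.mpr hΓ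
    have h3 := sub_nonneg.mpr hw1
    positivity
  rw [div_le_div_iff₀ hd1 hd2]
  have hm' := hm.ne'
  have hΓ' := hΓ0.ne'
  field_simp
  nlinarith [key, mul_nonneg hw0 (sub_nonneg.mpr hMm), hm.le, hΓ0.le,
    mul_pos hm hΓ0]
end

section
/- Weighted-mean ratio bound (general density): Let r, ρ : U → ℝ be measurable with 0 < m ≤ r ≤ M and 0 < ρ(u) ≤ Γ for all u, where F_0 is a probability measure and ∫ ρ dF_0 = 1. Then ∫ r ρ dF_0 / ∫ r dF_0 ≤ Γ·(M/m)/(Γ + M/m − 1), provided Γ ≥ 1. -/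
open MeasureTheory

theorem weighted_mean_ratio_bound_general {U : Type*} [MeasurableSpace U]
    (F0 : Measure U) [IsProbabilityMeasure F0]
    (r ρ : U → ℝ) (hr : Measurable r) (hρ : Measurable ρ)
    (m M Γ : ℝ) (hm : 0 < m) (hrm : ∀ u, m ≤ r u) (hrM : ∀ u, r u ≤ M)
    (hΓ : 1 ≤ Γ) (hρ0 : ∀ u, 0 < ρ u) (hρΓ : ∀ u, ρ u ≤ Γ)
    (hρint : ∫ u, ρ u ∂F0 = 1) :
    (∫ u, r u * ρ u ∂F0) / (∫ u, r u ∂F0) ≤ Γ * (M / m) / (Γ + M / m - 1) := by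
  have hU : Nonempty U := by
    by_contra h
    rw [not_nonempty_iff] at h
    have : (F0 Set.univ) = 0 := by simp [Set.univ_eq_empty_iff.2 h]
    simp [measure_univ] at this
  have hmM : m ≤ M := le_trans (hrm (Classical.arbitrary U)) (hrM (Classical.arbitrary U))
  have hM : 0 < M := lt_of_lt_of_le hm hmM
  have hΓ0 : 0 < Γ := lt_of_lt_of_le one_pos hΓ
  -- integrability
  have hir : Integrable r F0 := by
    refine Integrable.mono' (integrable_const M) hr.aestronglyMeasurable ?_
    filter_upwards with u
    rw [Real.norm_eq_abs, abs_le]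
    exact ⟨le_trans (by linarith : -M ≤ m) (hrm u), hrM u⟩
  have hiρ : Integrable ρ F0 := by
    refine Integrable.mono' (integrable_const Γ) hρ.aestronglyMeasurable ?_
    filter_upwards with u
    rw [Real.norm_eq_abs, abs_le]
    exact ⟨le_trans (by linarith : -Γ ≤ 0) (hρ0 u).le, hρΓ u⟩
  have hirρ : Integrable (fun u => r u * ρ u) F0 := by
    refine Integrable.mono' (integrable_const (M * Γ)) (hr.mul hρ).aestronglyMeasurable ?_
    filter_upwards with u
    rw [Real.norm_eq_abs, abs_mul]
    have h1 : |r u| ≤ M := abs_le.2 ⟨le_trans (by linarith : -M ≤ m) (hrm u), hrM u⟩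
    have h2 : |ρ u| ≤ Γ := abs_le.2 ⟨le_trans (by linarith : -Γ ≤ 0) (hρ0 u).le, hρΓ u⟩
    exact mul_le_mul h1 h2 (abs_nonneg _) hM.le
  set A := ∫ u, r u * ρ u ∂F0 with hA
  set B := ∫ u, r u ∂F0 with hB
  have hBm : m ≤ B := by
    have : ∫ _ : U, m ∂F0 ≤ B := integral_mono (integrable_const m) hir hrm
    simpa using this
  have hB0 : 0 < B := lt_of_lt_of_le hm hBm
  -- key pointwise inequality integrated
  have key : (m * Γ + M - m) * A ≤ Γ * M * B := by
    have hpt : ∀ u, (m * Γ + M - m) * (r u * ρ u) ≤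
        Γ * M * r u + Γ * M * m * ρ u - Γ * M * m := by
      intro u
      have h1 : 0 ≤ M * (r u - m) * (Γ - ρ u) :=
        mul_nonneg (mul_nonneg hM.le (by linarith [hrm u])) (by linarith [hρΓ u])
      have h2 : 0 ≤ m * (Γ - 1) * ((M - r u) * ρ u) :=
        mul_nonneg (mul_nonneg hm.le (by linarith))
          (mul_nonneg (by linarith [hrM u]) (hρ0 u).le)
      nlinarith [h1, h2]
    have hint : ∫ u, ((m * Γ + M - m) * (r u * ρ u)) ∂F0 ≤
        ∫ u, (Γ * M * r u + Γ * M * m * ρ u - Γ * M * m) ∂F0 := by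
      refine integral_mono (hirρ.const_mul _) ?_ hpt
      exact ((hir.const_mul _).add (hiρ.const_mul _)).sub (integrable_const _)
    have i1 : Integrable (fun u => Γ * M * r u + Γ * M * m * ρ u) F0 :=
      (hir.const_mul (Γ * M)).add (hiρ.const_mul (Γ * M * m))
    rw [integral_const_mul] at hint
    rw [integral_sub i1 (integrable_const _),
      integral_add (hir.const_mul (Γ * M)) (hiρ.const_mul (Γ * M * m)), integral_const_mul,
      integral_const_mul, hρint] at hint
    simp at hint
    linarith [hint]
  -- convert to the goal
  have hden : 0 < m * Γ + M - m := by nlinarith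
  have hden2 : 0 < Γ + M / m - 1 := by
    have : 1 ≤ M / m := (one_le_div hm).2 hmM
    linarith
  have heq : Γ * (M / m) / (Γ + M / m - 1) = Γ * M / (m * Γ + M - m) := by
    rw [div_eq_div_iff (ne_of_gt hden2) (ne_of_gt hden)]
    field_simp
  rw [heq, div_le_div_iff₀ hB0 hden]
  nlinarith [key]
end

section
/- If the counterfactual bounds E[Z(1)|A=0] ≥ m_1/B and E[Z(0)|A=1] ≤ m_0·B hold with B ≥ 1, m_0, m_1 ≥ 0, then the mixed average causal effect f·(m_1 − E[Z(0)|A=1]) + (1−f)·(E[Z(1)|A=0] − m_0) is at least (m_1 − m_0·B)(f + (1−f)/B) for any f ∈ [0,1]. -/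
theorem ace_lower_bound (m0 m1 B f c0 c1 : ℝ)
    (hm0 : 0 ≤ m0) (hm1 : 0 ≤ m1) (hB : 1 ≤ B)
    (hf0 : 0 ≤ f) (hf1 : f ≤ 1)
    (hc1 : m1 / B ≤ c1) (hc0 : c0 ≤ m0 * B) :
    (m1 - m0 * B) * (f + (1 - f) / B) ≤ f * (m1 - c0) + (1 - f) * (c1 - m0) := by
  have hB0 : (0:ℝ) < B := lt_of_lt_of_le one_pos hB
  rw [div_le_iff₀ hB0] at hc1
  have key : (m1 - m0 * B) * (f + (1 - f) / B) = f * (m1 - m0*B) + (1-f) * ((m1 - m0*B)/B) := by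
    field_simp
  rw [key]
  have h2 : (m1 - m0*B)/B ≤ c1 - m0 := by
    rw [div_le_iff₀ hB0]; nlinarith
  gcongr <;> linarith
end

section
/- Propensity score balancing for survival outcomes: if (T⁰, T¹) ⫫ A | X and e(X) = P(A=1|X), then P(A=1 | T⁰, T¹, e(X)) = e(X) almost surely; in particular (T⁰, T¹) ⫫ A | e(X), and since min(·, τ) is deterministic, also (min(T⁰,τ), min(T¹,τ)) ⫫ A | e(X). -/
open MeasureTheory ProbabilityTheory MeasurableSpace Set

/-- σ-algebra generated by a function. -/
abbrev sigmaGen {α β : Type*} [MeasurableSpace β] (f : α → β) : MeasurableSpace α :=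
  MeasurableSpace.comap f inferInstance

theorem prop_main {Ω : Type*} {mΩ : MeasurableSpace Ω}
    [StandardBorelSpace Ω] [Nonempty Ω]
    (μ : Measure Ω) [IsProbabilityMeasure μ]
    {E : Type*} [MeasurableSpace E]
    (X : Ω → E) (T0 T1 A e : Ω → ℝ)
    (hX : Measurable X) (hT0 : Measurable T0) (hT1 : Measurable T1)
    (hA : Measurable A) (he : Measurable e)
    (hAbin : ∀ ω, A ω = 0 ∨ A ω = 1)
    (hebdd : ∀ ω, 0 < e ω ∧ e ω < 1)
    (heX : Measurable[MeasurableSpace.comap X inferInstance] e)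
    (hps : μ[A | MeasurableSpace.comap X inferInstance] =ᵐ[μ] e)
    (hci : CondIndepFun (MeasurableSpace.comap X inferInstance) (hX.comap_le)
      (fun ω => (T0 ω, T1 ω)) A μ)
    (τ : ℝ) (hτ : 0 < τ) :
    μ[A | MeasurableSpace.comap (fun ω => (T0 ω, T1 ω, e ω)) inferInstance] =ᵐ[μ] e ∧
    CondIndepFun (MeasurableSpace.comap e inferInstance) (he.comap_le)
      (fun ω => (T0 ω, T1 ω)) A μ ∧
    CondIndepFun (MeasurableSpace.comap e inferInstance) (he.comap_le)
      (fun ω => (min (T0 ω) τ, min (T1 ω) τ)) A μ := by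
  set P : Ω → ℝ × ℝ := fun ω => (T0 ω, T1 ω) with hPdef
  have hP : Measurable P := hT0.prodMk hT1
  set Y : Ω → (ℝ × ℝ) × ℝ := fun ω => (P ω, e ω) with hYdef
  have hY : Measurable Y := hP.prodMk he
  have hm1 : sigmaGen X ≤ mΩ := hX.comap_le
  have hme1 : sigmaGen e ≤ sigmaGen X := heX.comap_le
  have hme : sigmaGen e ≤ mΩ := hme1.trans hm1
  have hmTe : sigmaGen Y ≤ mΩ := hY.comap_le
  have hcomap_eq : MeasurableSpace.comap (fun ω => (T0 ω, T1 ω, e ω))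
      inferInstance = sigmaGen Y := by
    have h1 : (fun ω => (T0 ω, T1 ω, e ω))
        = (MeasurableEquiv.prodAssoc : (ℝ × ℝ) × ℝ ≃ᵐ ℝ × ℝ × ℝ) ∘ Y := rfl
    rw [h1, ← MeasurableSpace.comap_comp,
      MeasurableEquiv.prodAssoc.measurableEmbedding.comap_eq]
  have hYmTe : Measurable[sigmaGen Y] Y := Measurable.of_comap_le le_rfl
  have hPmTe : Measurable[sigmaGen Y] P := measurable_fst.comp hYmTe
  have hemTe : Measurable[sigmaGen Y] e := measurable_snd.comp hYmTe
  have hmeTe : sigmaGen e ≤ sigmaGen Y := hemTe.comap_le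
  have heme : Measurable[sigmaGen e] e := Measurable.of_comap_le le_rfl
  have intA : Integrable A μ := by
    refine (integrable_const (1:ℝ)).mono' hA.aestronglyMeasurable
      (Filter.Eventually.of_forall fun ω => ?_)
    rcases hAbin ω with h | h <;> simp [h]
  have inte : Integrable e μ := by
    refine (integrable_const (1:ℝ)).mono' he.aestronglyMeasurable
      (Filter.Eventually.of_forall fun ω => ?_)
    rcases hebdd ω with ⟨h0, h1⟩
    rw [Real.norm_eq_abs, abs_of_pos h0]; exact h1.le
  set B : Set Ω := A ⁻¹' {1} with hBdef
  have hBmeas : MeasurableSet B := hA (measurableSet_singleton 1)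
  have hAB : (fun ω => B.indicator (fun _ => (1:ℝ)) ω) = A := by
    funext ω
    rcases hAbin ω with h | h <;>
      simp [hBdef, Set.indicator_apply, Set.mem_preimage, h]
  have hBc : ∀ (m : MeasurableSpace Ω), (μ⟦B | m⟧) =ᵐ[μ] μ[A | m] :=
    fun m => condExp_congr_ae (Filter.EventuallyEq.of_eq hAB)
  have hBm1 : (μ⟦B | sigmaGen X⟧) =ᵐ[μ] e := (hBc _).trans hps
  have hrect : ∀ s : Set (ℝ × ℝ), MeasurableSet s → ∀ w : Set ℝ, MeasurableSet w →
      ∫ ω in P ⁻¹' s ∩ e ⁻¹' w, A ω ∂μ = ∫ ω in P ⁻¹' s ∩ e ⁻¹' w, e ω ∂μ := by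
    intro s hs w hw
    have ht1 : MeasurableSet (P ⁻¹' s) := hP hs
    have hu1 : MeasurableSet[sigmaGen X] (e ⁻¹' w) := heX hw
    have hu : MeasurableSet (e ⁻¹' w) := he hw
    have hintt1 : Integrable ((P ⁻¹' s).indicator fun _ => (1:ℝ)) μ :=
      (integrable_const 1).indicator ht1
    have hint1 : Integrable ((P ⁻¹' s ∩ B).indicator fun _ => (1:ℝ)) μ :=
      (integrable_const 1).indicator (ht1.inter hBmeas)
    have hintmul : Integrable (e * (P ⁻¹' s).indicator fun _ => (1:ℝ)) μ := by
      refine (integrable_const (1:ℝ)).mono'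
        ((he.mul (measurable_const.indicator ht1)).aestronglyMeasurable)
        (Filter.Eventually.of_forall fun ω => ?_)
      rcases hebdd ω with ⟨h0, h1⟩
      by_cases hω : ω ∈ P ⁻¹' s <;>
        simp [Pi.mul_apply, Set.indicator_apply, hω, Real.norm_eq_abs, abs_of_pos h0, h1.le,
          abs_nonneg]
    -- conditional independence in condexp form
    rw [condIndepFun_iff_condExp_inter_preimage_eq_mul hP hA] at hci
    have hstep : (μ⟦P ⁻¹' s ∩ B | sigmaGen X⟧)
        =ᵐ[μ] fun ω => (μ⟦P ⁻¹' s | sigmaGen X⟧) ω * e ω := by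
      refine (hci s {1} hs (measurableSet_singleton 1)).trans ?_
      filter_upwards [hBm1] with ω hω
      rw [hω]
    have hpull : μ[e * (P ⁻¹' s).indicator fun _ => (1:ℝ) | sigmaGen X]
        =ᵐ[μ] e * μ⟦P ⁻¹' s | sigmaGen X⟧ :=
      condExp_mul_of_stronglyMeasurable_left heX.stronglyMeasurable hintmul hintt1
    calc ∫ ω in P ⁻¹' s ∩ e ⁻¹' w, A ω ∂μ
        = ∫ ω in e ⁻¹' w ∩ P ⁻¹' s, A ω ∂μ := by rw [inter_comm]
      _ = ∫ ω in e ⁻¹' w, (P ⁻¹' s).indicator A ω ∂μ := (setIntegral_indicator ht1).symm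
      _ = ∫ ω in e ⁻¹' w, (P ⁻¹' s ∩ B).indicator (fun _ => (1:ℝ)) ω ∂μ := by
          refine setIntegral_congr_ae hu (Filter.Eventually.of_forall fun ω _ => ?_)
          by_cases hω : ω ∈ P ⁻¹' s
          · rcases hAbin ω with h | h <;>
              simp [Set.indicator_apply, hω, hBdef, Set.mem_preimage, h]
          · simp [Set.indicator_apply, hω]
      _ = ∫ ω in e ⁻¹' w, (μ⟦P ⁻¹' s ∩ B | sigmaGen X⟧) ω ∂μ :=
          (setIntegral_condExp hm1 hint1 hu1).symm
      _ = ∫ ω in e ⁻¹' w, (μ⟦P ⁻¹' s | sigmaGen X⟧) ω * e ω ∂μ := by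
          refine setIntegral_congr_ae hu ?_
          filter_upwards [hstep] with ω hω _
          exact hω
      _ = ∫ ω in e ⁻¹' w, (e * μ⟦P ⁻¹' s | sigmaGen X⟧) ω ∂μ := by
          refine setIntegral_congr_ae hu (Filter.Eventually.of_forall fun ω _ => ?_)
          simp [Pi.mul_apply, mul_comm]
      _ = ∫ ω in e ⁻¹' w, (μ[e * (P ⁻¹' s).indicator fun _ => (1:ℝ) | sigmaGen X]) ω ∂μ := by
          refine setIntegral_congr_ae hu ?_
          filter_upwards [hpull] with ω hω _
          exact hω.symm
      _ = ∫ ω in e ⁻¹' w, (e * (P ⁻¹' s).indicator fun _ => (1:ℝ)) ω ∂μ :=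
          setIntegral_condExp hm1 hintmul hu1
      _ = ∫ ω in e ⁻¹' w, (P ⁻¹' s).indicator e ω ∂μ := by
          refine setIntegral_congr_ae hu (Filter.Eventually.of_forall fun ω _ => ?_)
          by_cases hω : ω ∈ P ⁻¹' s <;> simp [Pi.mul_apply, Set.indicator_apply, hω]
      _ = ∫ ω in e ⁻¹' w ∩ P ⁻¹' s, e ω ∂μ := setIntegral_indicator ht1
      _ = ∫ ω in P ⁻¹' s ∩ e ⁻¹' w, e ω ∂μ := by rw [inter_comm]
  have htot : ∫ ω, A ω ∂μ = ∫ ω, e ω ∂μ := by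
    rw [show (∫ ω, A ω ∂μ) = ∫ ω, (μ[A | sigmaGen X]) ω ∂μ from (integral_condExp hm1).symm]
    exact integral_congr_ae hps
  have hall : ∀ t : Set Ω, MeasurableSet[sigmaGen Y] t →
      ∫ ω in t, A ω ∂μ = ∫ ω in t, e ω ∂μ := by
    have hgen : (sigmaGen Y : MeasurableSpace Ω) = MeasurableSpace.generateFrom
        (Set.preimage Y '' (Set.image2 (· ×ˢ ·) {u : Set (ℝ × ℝ) | MeasurableSet u}
          {v : Set ℝ | MeasurableSet v})) := by
      conv_lhs => rw [sigmaGen,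
        show (inferInstance : MeasurableSpace ((ℝ × ℝ) × ℝ)) = _ from generateFrom_prod.symm]
      rw [MeasurableSpace.comap_generateFrom]
    have hpi : IsPiSystem (Set.preimage Y '' (Set.image2 (· ×ˢ ·)
        {u : Set (ℝ × ℝ) | MeasurableSet u} {v : Set ℝ | MeasurableSet v})) :=
      isPiSystem_prod.comap Y
    refine MeasurableSpace.induction_on_inter (m := sigmaGen Y) hgen hpi ?_ ?_ ?_ ?_
    · simp
    · rintro _ ⟨u, ⟨v, hv, w, hw, rfl⟩, rfl⟩
      rw [show Y ⁻¹' (v ×ˢ w) = P ⁻¹' v ∩ e ⁻¹' w from Set.mk_preimage_prod P e]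
      exact hrect v hv w hw
    · intro t htm hC
      have htmeas : MeasurableSet t := hmTe _ htm
      have h1 := integral_add_compl htmeas intA
      have h2 := integral_add_compl htmeas inte
      linarith
    · intro f hdisj hfm hC
      rw [integral_iUnion (fun i => hmTe _ (hfm i)) hdisj intA.integrableOn,
        integral_iUnion (fun i => hmTe _ (hfm i)) hdisj inte.integrableOn]
      exact tsum_congr hC
  have heTe : μ[A | sigmaGen Y] =ᵐ[μ] e := by
    refine (ae_eq_condExp_of_forall_setIntegral_eq hmTe intA
      (fun s _ _ => inte.integrableOn)
      (fun s hs _ => (hall s hs).symm)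
      (hemTe.stronglyMeasurable.aestronglyMeasurable)).symm
  have hAme : μ[A | sigmaGen e] =ᵐ[μ] e := by
    refine ((condExp_condExp_of_le hme1 hm1).symm.trans ?_)
    refine (condExp_congr_ae hps).trans ?_
    rw [condExp_of_stronglyMeasurable hme heme.stronglyMeasurable inte]
  have hBme : (μ⟦B | sigmaGen e⟧) =ᵐ[μ] e := (hBc _).trans hAme
  have hkey : ∀ s : Set (ℝ × ℝ), MeasurableSet s →
      (μ⟦(P ⁻¹' s) ∩ B | sigmaGen e⟧)
        =ᵐ[μ] fun ω => (μ⟦P ⁻¹' s | sigmaGen e⟧) ω * e ω := by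
    intro s hs
    have ht1 : MeasurableSet (P ⁻¹' s) := hP hs
    have ht1Te : MeasurableSet[sigmaGen Y] (P ⁻¹' s) := hPmTe hs
    have hintt1 : Integrable ((P ⁻¹' s).indicator fun _ => (1:ℝ)) μ :=
      (integrable_const 1).indicator ht1
    have hintmulA : Integrable (((P ⁻¹' s).indicator fun _ => (1:ℝ)) * A) μ := by
      refine (integrable_const (1:ℝ)).mono'
        (((measurable_const.indicator ht1).mul hA).aestronglyMeasurable)
        (Filter.Eventually.of_forall fun ω => ?_)
      rcases hAbin ω with h | h <;> by_cases hω : ω ∈ P ⁻¹' s <;>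
        simp [Pi.mul_apply, Set.indicator_apply, hω, h]
    have hintmule : Integrable (e * ((P ⁻¹' s).indicator fun _ => (1:ℝ))) μ := by
      refine (integrable_const (1:ℝ)).mono'
        ((he.mul (measurable_const.indicator ht1)).aestronglyMeasurable)
        (Filter.Eventually.of_forall fun ω => ?_)
      rcases hebdd ω with ⟨h0, h1⟩
      by_cases hω : ω ∈ P ⁻¹' s <;>
        simp [Pi.mul_apply, Set.indicator_apply, hω, Real.norm_eq_abs, abs_of_pos h0, h1.le,
          abs_nonneg]
    have hind : (P ⁻¹' s ∩ B).indicator (fun _ => (1:ℝ))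
        = ((P ⁻¹' s).indicator fun _ => (1:ℝ)) * A := by
      funext ω
      by_cases hω : ω ∈ P ⁻¹' s
      · rcases hAbin ω with h | h <;>
          simp [Pi.mul_apply, Set.indicator_apply, hω, hBdef, Set.mem_preimage, h]
      · simp [Pi.mul_apply, Set.indicator_apply, hω]
    have hstep3 : μ[((P ⁻¹' s).indicator fun _ => (1:ℝ)) * A | sigmaGen Y]
        =ᵐ[μ] fun ω => (P ⁻¹' s).indicator (fun _ => (1:ℝ)) ω * e ω := by
      refine (condExp_mul_of_stronglyMeasurable_left
        (stronglyMeasurable_const.indicator ht1Te) hintmulA intA).trans ?_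
      filter_upwards [heTe] with ω hω
      simp only [Pi.mul_apply, hω]
    calc (μ⟦P ⁻¹' s ∩ B | sigmaGen e⟧)
        =ᵐ[μ] μ[((P ⁻¹' s).indicator fun _ => (1:ℝ)) * A | sigmaGen e] := by
          rw [hind]
      _ =ᵐ[μ] μ[μ[((P ⁻¹' s).indicator fun _ => (1:ℝ)) * A | sigmaGen Y] | sigmaGen e] :=
          (condExp_condExp_of_le hmeTe hmTe).symm
      _ =ᵐ[μ] μ[e * ((P ⁻¹' s).indicator fun _ => (1:ℝ)) | sigmaGen e] := by
          refine condExp_congr_ae (hstep3.trans ?_)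
          exact Filter.Eventually.of_forall fun ω => by simp [Pi.mul_apply, mul_comm]
      _ =ᵐ[μ] e * μ⟦P ⁻¹' s | sigmaGen e⟧ :=
          condExp_mul_of_stronglyMeasurable_left heme.stronglyMeasurable hintmule hintt1
      _ =ᵐ[μ] fun ω => (μ⟦P ⁻¹' s | sigmaGen e⟧) ω * e ω :=
          Filter.Eventually.of_forall fun ω => by simp [Pi.mul_apply, mul_comm]
  have hBcme : (μ⟦Bᶜ | sigmaGen e⟧) =ᵐ[μ] fun ω => 1 - e ω := by
    have hind : Bᶜ.indicator (fun _ => (1:ℝ))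
        = (fun _ => (1:ℝ)) - B.indicator (fun _ => 1) := by
      funext ω; by_cases hω : ω ∈ B <;> simp [Set.indicator_apply, hω]
    calc (μ⟦Bᶜ | sigmaGen e⟧)
        =ᵐ[μ] μ[(fun _ => (1:ℝ)) - B.indicator (fun _ => 1) | sigmaGen e] := by rw [hind]
      _ =ᵐ[μ] μ[(fun _ => (1:ℝ)) | sigmaGen e] - μ⟦B | sigmaGen e⟧ :=
          condExp_sub (integrable_const (1:ℝ)) ((integrable_const (1:ℝ)).indicator hBmeas) _
      _ =ᵐ[μ] fun ω => 1 - e ω := by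
          filter_upwards [hBme] with ω hb
          simp [Pi.sub_apply, hb, condExp_const hme (1:ℝ)]
  have hCI : CondIndepFun (sigmaGen e) he.comap_le P A μ := by
    rw [condIndepFun_iff _ he.comap_le P A hP hA]
    rintro t1 t2 ⟨s, hs, rfl⟩ ⟨s', hs', rfl⟩
    have ht1 : MeasurableSet (P ⁻¹' s) := hP hs
    have hintt1 : Integrable ((P ⁻¹' s).indicator fun _ => (1:ℝ)) μ :=
      (integrable_const 1).indicator ht1
    have hintcap : Integrable ((P ⁻¹' s ∩ B).indicator fun _ => (1:ℝ)) μ :=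
      (integrable_const 1).indicator (ht1.inter hBmeas)
    by_cases h1 : (1:ℝ) ∈ s' <;> by_cases h0 : (0:ℝ) ∈ s'
    · have hA' : A ⁻¹' s' = Set.univ := by
        ext ω; rcases hAbin ω with h | h <;> simp [Set.mem_preimage, h, h0, h1]
      rw [hA', Set.inter_univ]
      refine Filter.Eventually.of_forall fun ω => ?_
      simp [Pi.mul_apply, Set.indicator_univ, condExp_const hme (1:ℝ)]
    · have hA' : A ⁻¹' s' = B := by
        ext ω
        rcases hAbin ω with h | h <;>
          simp [Set.mem_preimage, hBdef, Set.mem_singleton_iff, h, h0, h1]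
      rw [hA']
      refine (hkey s hs).trans ?_
      filter_upwards [hBme] with ω hω
      simp [Pi.mul_apply, hω]
    · have hA' : A ⁻¹' s' = Bᶜ := by
        ext ω
        rcases hAbin ω with h | h <;>
          simp [Set.mem_preimage, hBdef, Set.mem_singleton_iff, h, h0, h1]
      rw [hA']
      have hind2 : (P ⁻¹' s ∩ Bᶜ).indicator (fun _ => (1:ℝ))
          = (P ⁻¹' s).indicator (fun _ => 1) - (P ⁻¹' s ∩ B).indicator (fun _ => 1) := by
        funext ω
        by_cases hω : ω ∈ P ⁻¹' s <;> by_cases hω' : ω ∈ B <;>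
          simp [Set.indicator_apply, hω, hω']
      calc (μ⟦P ⁻¹' s ∩ Bᶜ | sigmaGen e⟧)
          =ᵐ[μ] μ[(P ⁻¹' s).indicator (fun _ => (1:ℝ))
              - (P ⁻¹' s ∩ B).indicator (fun _ => 1) | sigmaGen e] := by rw [hind2]
        _ =ᵐ[μ] μ⟦P ⁻¹' s | sigmaGen e⟧ - μ⟦P ⁻¹' s ∩ B | sigmaGen e⟧ :=
            condExp_sub hintt1 hintcap _
        _ =ᵐ[μ] (μ⟦P ⁻¹' s | sigmaGen e⟧) * μ⟦Bᶜ | sigmaGen e⟧ := by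
            filter_upwards [hkey s hs, hBcme] with ω hk hc
            simp only [Pi.sub_apply, Pi.mul_apply, hk, hc]
            ring
    · have hA' : A ⁻¹' s' = ∅ := by
        ext ω; rcases hAbin ω with h | h <;> simp [Set.mem_preimage, h, h0, h1]
      rw [hA', Set.inter_empty]
      have h0' : (μ⟦(∅ : Set Ω) | sigmaGen e⟧) =ᵐ[μ] 0 := by
        have hz : (∅ : Set Ω).indicator (fun _ => (1:ℝ)) = (0 : Ω → ℝ) := Set.indicator_empty _
        rw [hz, condExp_zero]
      filter_upwards [h0'] with ω hω
      simp only [Pi.mul_apply, hω, Pi.zero_apply, mul_zero]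
  refine ⟨hcomap_eq ▸ heTe, hCI, ?_⟩
  have hφ : Measurable (fun p : ℝ × ℝ => (min p.1 τ, min p.2 τ)) :=
    (measurable_fst.min measurable_const).prodMk (measurable_snd.min measurable_const)
  exact hCI.comp hφ measurable_id


theorem propensity_score_balancing_survival {Ω : Type*} [MeasurableSpace Ω]
    [StandardBorelSpace Ω] [Nonempty Ω]
    (μ : Measure Ω) [IsProbabilityMeasure μ]
    {E : Type*} [MeasurableSpace E]
    (X : Ω → E) (T0 T1 A e : Ω → ℝ)
    (hX : Measurable X) (hT0 : Measurable T0) (hT1 : Measurable T1)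
    (hA : Measurable A) (he : Measurable e)
    (hAbin : ∀ ω, A ω = 0 ∨ A ω = 1)
    (hebdd : ∀ ω, 0 < e ω ∧ e ω < 1)
    -- e(X) is the propensity score: e = P(A = 1 | X), and is σ(X)-measurable
    (heX : Measurable[MeasurableSpace.comap X inferInstance] e)
    (hps : μ[A | MeasurableSpace.comap X inferInstance] =ᵐ[μ] e)
    -- conditional independence (T0, T1) ⫫ A | X
    (hci : CondIndepFun (MeasurableSpace.comap X inferInstance) (hX.comap_le)
      (fun ω => (T0 ω, T1 ω)) A μ)
    (τ : ℝ) (hτ : 0 < τ) :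
    μ[A | MeasurableSpace.comap (fun ω => (T0 ω, T1 ω, e ω)) inferInstance] =ᵐ[μ] e ∧
    CondIndepFun (MeasurableSpace.comap e inferInstance) (he.comap_le)
      (fun ω => (T0 ω, T1 ω)) A μ ∧
    CondIndepFun (MeasurableSpace.comap e inferInstance) (he.comap_le)
      (fun ω => (min (T0 ω) τ, min (T1 ω) τ)) A μ :=
  prop_main μ X T0 T1 A e hX hT0 hT1 hA he hAbin hebdd heX hps hci τ hτ
end
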